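/- For C : Set Ordinal define the monotone operator D_C : Set Ordinal → Set Ordinal by D_C(H) = {α | ∃ β, β < α ∧ β ∈ C ∧ β ∈ H}. Define Φ_k : Set Ordinal → Set Ordinal for k ≥ 1 by recursion: Φ_1(C) = ⋂_{n ∈ ℕ} (D_C)^[n](Set.univ), and Φ_{k+1}(C) = ⋂_{n ∈ ℕ} (H ↦ Φ_k(C ∩ H))^[n](Set.univ). Then for every k ≥ 1, Φ_k(Set.univ) = {α : Ordinal | ω^k ≤ α}. -/

import Mathlib

/-- The operator `D_C H = {α | ∃ β, β < α ∧ β ∈ C ∧ β ∈ H}`, the semantics of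
`◇(C ∧ −)` on the ordinal model where `α → β` iff `β < α`. -/
def D (C : Set Ordinal) (H : Set Ordinal) : Set Ordinal :=
  {α | ∃ β, β < α ∧ β ∈ C ∧ β ∈ H}

/-- `Phi k` is the semantics `Φ_k` of `ν^ω x₁ … ν^ω x_k.◇(x₁ ∧ … ∧ x_k ∧ −)`, defined
for `k ≥ 1` by `Φ_1 C = ⋂_n (D_C)^[n] univ` and
`Φ_{k+1} C = ⋂_n (H ↦ Φ_k (C ∩ H))^[n] univ`.  (`Phi 0` is a dummy value.) -/
def Phi : ℕ → Set Ordinal → Set Ordinal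
  | 0, _ => Set.univ
  | 1, C => ⋂ n : ℕ, (D C)^[n] Set.univ
  | (k + 2), C => ⋂ n : ℕ, (fun H => Phi (k + 1) (C ∩ H))^[n] Set.univ

universe u

noncomputable def otype (s : Set Ordinal.{u}) : Ordinal.{u+1} :=
  Ordinal.type ((· < ·) : s → s → Prop)

def OT (δ : Ordinal.{u}) (s : Set Ordinal.{u}) : Prop := Ordinal.lift.{u+1} δ ≤ otype s

theorem OT_iff {δ : Ordinal.{u}} {s : Set Ordinal.{u}} :
    OT δ s ↔ ∃ f : Ordinal → Ordinal, StrictMonoOn f (Set.Iio δ) ∧ ∀ β < δ, f β ∈ s := by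
  have h0 : OT δ s ↔
      Nonempty (InitialSeg ((· < ·) : δ.ToType → δ.ToType → Prop) ((· < ·) : s → s → Prop)) := by
    have h1 := @Ordinal.lift_type_le.{u, u+1, u+1} δ.ToType s
      ((· < ·) : δ.ToType → δ.ToType → Prop) ((· < ·) : s → s → Prop)
      isWellOrder_lt isWellOrder_lt
    rw [Ordinal.type_toType, Ordinal.lift_id] at h1
    exact h1
  rw [h0]
  constructor
  · rintro ⟨e⟩
    classical
    refine ⟨fun β => if h : β < δ then (e ((Ordinal.ToType.mk (o := δ)) ⟨β, h⟩) : Ordinal) else 0,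
      ?_, ?_⟩
    · intro x hx y hy hxy
      rw [Set.mem_Iio] at hx hy
      simp only [dif_pos hx, dif_pos hy]
      have : ((Ordinal.ToType.mk (o := δ)) ⟨x, hx⟩) < ((Ordinal.ToType.mk (o := δ)) ⟨y, hy⟩) :=
        (Ordinal.ToType.mk (o := δ)).lt_iff_lt.2 (Subtype.mk_lt_mk.2 hxy)
      exact Subtype.coe_lt_coe.2 (e.map_rel_iff.2 this)
    · intro β hβ
      simp only [dif_pos hβ]
      exact (e ((Ordinal.ToType.mk (o := δ)) ⟨β, hβ⟩)).2
  · rintro ⟨f, hf, hmem⟩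
    have hsm : StrictMono (fun x : δ.ToType =>
        (⟨f ((Ordinal.ToType.mk (o := δ)).symm x : Ordinal),
          hmem _ ((Ordinal.ToType.mk (o := δ)).symm x).2⟩ : s)) := by
      intro x y hxy
      have h1 : ((Ordinal.ToType.mk (o := δ)).symm x : Ordinal) <
          ((Ordinal.ToType.mk (o := δ)).symm y : Ordinal) :=
        Subtype.coe_lt_coe.2 ((Ordinal.ToType.mk (o := δ)).symm.lt_iff_lt.2 hxy)
      exact Subtype.mk_lt_mk.2 (hf ((Ordinal.ToType.mk (o := δ)).symm x).2
        ((Ordinal.ToType.mk (o := δ)).symm y).2 h1)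
    exact ⟨((OrderEmbedding.ofStrictMono _ hsm).ltEmbedding).collapse⟩

theorem le_apply_of_strictMonoOn {f : Ordinal → Ordinal} {δ : Ordinal}
    (hf : StrictMonoOn f (Set.Iio δ)) : ∀ β < δ, β ≤ f β := by
  intro β
  induction β using Ordinal.induction with
  | h β IH =>
    intro hβ
    by_contra hcon
    push_neg at hcon
    have h1 : f (f β) < f β := hf (Set.mem_Iio.2 (hcon.trans hβ)) (Set.mem_Iio.2 hβ) hcon
    exact absurd h1 (not_lt.2 (IH (f β) hcon (hcon.trans hβ)))

theorem OT_Iio {δ α : Ordinal} : OT δ (Set.Iio α) ↔ δ ≤ α := by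
  rw [OT_iff]
  constructor
  · rintro ⟨f, hf, hmem⟩
    by_contra hcon
    push_neg at hcon
    exact absurd (hmem α hcon) (not_lt.2 (le_apply_of_strictMonoOn hf α hcon))
  · intro h
    exact ⟨id, strictMono_id.strictMonoOn _, fun β hβ => Set.mem_Iio.2 (hβ.trans_le h)⟩

theorem OT_one {s : Set Ordinal} : OT 1 s ↔ s.Nonempty := by
  rw [OT_iff]
  constructor
  · rintro ⟨f, _, hmem⟩
    exact ⟨f 0, hmem 0 zero_lt_one⟩
  · rintro ⟨a, ha⟩
    refine ⟨fun _ => a, ?_, fun _ _ => ha⟩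
    intro x hx y hy hxy
    rw [Set.mem_Iio, Ordinal.lt_one_iff_zero] at hx hy
    exact absurd hxy (by rw [hx, hy]; exact lt_irrefl 0)

theorem OT_tail {C : Set Ordinal} {δ' δ α : Ordinal} (hδ : 0 < δ) :
    OT δ (C ∩ {β | OT δ' (C ∩ Set.Iio β)} ∩ Set.Iio α) ↔ OT (δ' + δ) (C ∩ Set.Iio α) := by
  rw [OT_iff, OT_iff]
  constructor
  · rintro ⟨f, hf, hmem⟩
    obtain ⟨⟨hfC, hfH⟩, hfα⟩ := hmem 0 hδ
    rw [Set.mem_setOf_eq, OT_iff] at hfH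
    obtain ⟨g, hg, hgm⟩ := hfH
    classical
    refine ⟨fun γ => if γ < δ' then g γ else f (γ - δ'), ?_, ?_⟩
    · intro x hx y hy hxy
      rw [Set.mem_Iio] at hx hy
      by_cases h1 : x < δ'
      · by_cases h2 : y < δ'
        · simpa [h1, h2] using hg h1 h2 hxy
        · simp only [if_pos h1, if_neg h2]
          have hy2 : y - δ' < δ := Ordinal.sub_lt_of_lt_add hy hδ
          have hgx : g x < f 0 := (hgm x h1).2
          rcases eq_or_lt_of_le ((show (0 : Ordinal) ≤ y - δ' from zero_le)) with h3 | h3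
          · rw [← h3]; exact hgx
          · exact hgx.trans (hf hδ hy2 h3)
      · have h2 : ¬ y < δ' := fun h => h1 (hxy.trans h)
        simp only [if_neg h1, if_neg h2]
        have hx2 : x - δ' < δ := Ordinal.sub_lt_of_lt_add hx hδ
        have hy2 : y - δ' < δ := Ordinal.sub_lt_of_lt_add hy hδ
        refine hf hx2 hy2 ?_
        rw [← add_lt_add_iff_left δ',
          Ordinal.add_sub_cancel_of_le (not_lt.1 h1), Ordinal.add_sub_cancel_of_le (not_lt.1 h2)]
        exact hxy
    · intro γ hγ
      by_cases h1 : γ < δ'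
      · simp only [if_pos h1]
        exact ⟨(hgm γ h1).1, Set.mem_Iio.2 ((Set.mem_Iio.1 (hgm γ h1).2).trans (Set.mem_Iio.1 hfα))⟩
      · simp only [if_neg h1]
        have hγ2 : γ - δ' < δ := Ordinal.sub_lt_of_lt_add hγ hδ
        exact ⟨(hmem _ hγ2).1.1, (hmem _ hγ2).2⟩
  · rintro ⟨h, hh, hhm⟩
    refine ⟨fun β => h (δ' + β), ?_, ?_⟩
    · intro x hx y hy hxy
      rw [Set.mem_Iio] at hx hy
      exact hh (add_lt_add_iff_left δ' |>.2 hx) (add_lt_add_iff_left δ' |>.2 hy)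
        ((add_lt_add_iff_left δ').2 hxy)
    · intro β hβ
      have hmem1 := hhm (δ' + β) ((add_lt_add_iff_left δ').2 hβ)
      refine ⟨⟨hmem1.1, ?_⟩, hmem1.2⟩
      rw [Set.mem_setOf_eq, OT_iff]
      refine ⟨h, hh.mono fun γ hγ => ?_, fun γ hγ => ?_⟩
      · exact Set.mem_Iio.2 ((Set.mem_Iio.1 hγ).trans_le ((show δ' ≤ δ' + δ from le_self_add)))
      · have hγ1 : γ < δ' + β := hγ.trans_le ((show δ' ≤ δ' + β from le_self_add))
        have hγ2 : γ < δ' + δ := hγ.trans_le ((show δ' ≤ δ' + δ from le_self_add))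
        exact ⟨(hhm γ hγ2).1, hh hγ2 ((add_lt_add_iff_left δ').2 hβ) hγ1⟩

theorem OT_zero (s : Set Ordinal) : OT 0 s := by
  rw [OT, Ordinal.lift_zero]
  exact zero_le

theorem iter_eq {C : Set Ordinal} {δ : Ordinal} (hδ : 0 < δ)
    {G : Set Ordinal → Set Ordinal}
    (hG : ∀ H, G H = {α | OT δ (C ∩ H ∩ Set.Iio α)}) : ∀ n : ℕ,
    G^[n] Set.univ = {α | OT (δ * n) (C ∩ Set.Iio α)} := by
  intro n
  induction n with
  | zero =>
    simp only [Function.iterate_zero, id_eq, Nat.cast_zero, mul_zero]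
    exact (Set.eq_univ_of_forall fun α => OT_zero _).symm
  | succ n IH =>
    rw [Function.iterate_succ_apply', IH, hG]
    ext α
    rw [Set.mem_setOf_eq, Set.mem_setOf_eq]
    have hc : δ * ((n + 1 : ℕ) : Ordinal) = δ * (n : ℕ) + δ := by
      rw [Nat.cast_succ, mul_add, mul_one]
    rw [hc]
    exact OT_tail hδ

theorem iInter_iter {C : Set Ordinal} {δ : Ordinal} :
    ⋂ n : ℕ, {α | OT (δ * n) (C ∩ Set.Iio α)} =
      {α | OT (δ * Ordinal.omega0) (C ∩ Set.Iio α)} := by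
  ext α
  simp only [Set.mem_iInter, Set.mem_setOf_eq, OT]
  constructor
  · intro hn
    rw [Ordinal.lift_mul, Ordinal.lift_omega0]
    rw [Ordinal.mul_le_iff_of_isSuccLimit Ordinal.isSuccLimit_omega0]
    intro b hb
    obtain ⟨m, rfl⟩ := Ordinal.lt_omega0.1 hb
    have := hn m
    rwa [Ordinal.lift_mul, Ordinal.lift_natCast] at this
  · intro h n
    refine le_trans ?_ h
    rw [Ordinal.lift_le]
    exact mul_le_mul_right (le_of_lt (Ordinal.nat_lt_omega0 n)) δ

theorem Phi_eq (k : ℕ) (C : Set Ordinal) :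
    Phi (k + 1) C = {α | OT (Ordinal.omega0 ^ ((k + 1 : ℕ) : Ordinal)) (C ∩ Set.Iio α)} := by
  induction k generalizing C with
  | zero =>
    have hD : ∀ H, D C H = {α | OT 1 (C ∩ H ∩ Set.Iio α)} := by
      intro H
      ext α
      rw [Set.mem_setOf_eq, OT_one, D, Set.mem_setOf_eq]
      constructor
      · rintro ⟨β, h1, h2, h3⟩; exact ⟨β, ⟨h2, h3⟩, h1⟩
      · rintro ⟨β, ⟨h2, h3⟩, h1⟩; exact ⟨β, h1, h2, h3⟩
    show (⋂ n : ℕ, (D C)^[n] Set.univ) = _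
    have h2 := iter_eq (C := C) zero_lt_one hD
    simp only [h2]
    rw [iInter_iter]
    have h3 : (1 : Ordinal) * Ordinal.omega0 = Ordinal.omega0 ^ ((0 + 1 : ℕ) : Ordinal) := by
      simp [Ordinal.opow_one]
    rw [h3]
  | succ k IH =>
    show (⋂ n : ℕ, (fun H => Phi (k + 1) (C ∩ H))^[n] Set.univ) = _
    have hG : ∀ H, Phi (k + 1) (C ∩ H) =
        {α | OT (Ordinal.omega0 ^ ((k + 1 : ℕ) : Ordinal)) (C ∩ H ∩ Set.Iio α)} := by
      intro H; rw [IH]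
    have hpos : (0 : Ordinal) < Ordinal.omega0 ^ ((k + 1 : ℕ) : Ordinal) :=
      Ordinal.opow_pos _ Ordinal.omega0_pos
    have := iter_eq (C := C) hpos hG
    simp only [this]
    rw [iInter_iter]
    have : Ordinal.omega0 ^ ((k + 1 : ℕ) : Ordinal) * Ordinal.omega0 =
        Ordinal.omega0 ^ ((k + 2 : ℕ) : Ordinal) := by
      rw [show ((k + 2 : ℕ) : Ordinal) = Order.succ ((k + 1 : ℕ) : Ordinal) by
        push_cast
        rw [← Ordinal.add_one_eq_succ, add_assoc, one_add_one_eq_two],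
        Ordinal.opow_succ]
    rw [this]

theorem Phi_univ_eq_omega_pow (k : ℕ) (hk : 1 ≤ k) :
    Phi k Set.univ = {α : Ordinal | Ordinal.omega0 ^ (k : Ordinal) ≤ α} := by
  obtain ⟨m, rfl⟩ : ∃ m, k = m + 1 := ⟨k - 1, (Nat.succ_pred_eq_of_pos hk).symm⟩
  rw [Phi_eq]
  ext α
  rw [Set.mem_setOf_eq, Set.mem_setOf_eq, Set.univ_inter, OT_Iio]
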